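/- Let S be a nonempty h-admissible set, let n ≥ j(S), and let σ ∈ I_h(S, j(S)). Define t(σ) := max{σ_k : 1 ≤ k ≤ j(S) and h(k) ≥ j(S)+1}. Then the number of permutations π ∈ I_h(S,n) whose flattening satisfies π|_{j(S)} = σ equals the binomial coefficient C(n − t(σ), n − j(S)). -/

import Mathlib

open Finset

/-- The 1-based `k`-th entry (as a value in `{1,…,n}`) of a permutation of `Fin n`. -/
def entry {n : ℕ} (π : Equiv.Perm (Fin n)) (k : ℕ) : ℕ :=
  if hk : k - 1 < n then ((π ⟨k - 1, hk⟩ : Fin n) : ℕ) + 1 else 0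

/-- The set of possible h-inversions `P_h = {(i,j) : 0 < i, i < j ≤ h i}`. -/
def Ph (h : ℕ → ℕ) : Set (ℕ × ℕ) := {p | 0 < p.1 ∧ p.1 < p.2 ∧ p.2 ≤ h p.1}

/-- The set of h-inversions of a permutation `π ∈ S_n`, as 1-based pairs:
`inv_h(π) = {(i,j) : i < j ≤ min(h i, n), π_i > π_j}`. -/
def invh (h : ℕ → ℕ) {n : ℕ} (π : Equiv.Perm (Fin n)) : Finset (ℕ × ℕ) :=
  ((Finset.univ : Finset (Fin n × Fin n)).filter
      (fun p => (p.1 : ℕ) < (p.2 : ℕ) ∧ (p.2 : ℕ) + 1 ≤ h ((p.1 : ℕ) + 1) ∧ π p.2 < π p.1)).image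
    (fun p => ((p.1 : ℕ) + 1, (p.2 : ℕ) + 1))

/-- `I_h(S,n)`, the set of permutations of `S_n` with h-inversion set `S`. -/
def Ih (h : ℕ → ℕ) (S : Finset (ℕ × ℕ)) (n : ℕ) : Finset (Equiv.Perm (Fin n)) :=
  Finset.univ.filter (fun π => invh h π = S)

/-- `𝓘_h(S;n) = #I_h(S,n)`. -/
def Icount (h : ℕ → ℕ) (S : Finset (ℕ × ℕ)) (n : ℕ) : ℕ := (Ih h S n).card

/-- `S` is h-admissible when it is the h-inversion set of some permutation. -/
def Admissible (h : ℕ → ℕ) (S : Finset (ℕ × ℕ)) : Prop := ∃ n, (Ih h S n).Nonempty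

/-- `j(S)`, the largest index appearing in a pair of `S`. -/
def jS (S : Finset (ℕ × ℕ)) : ℕ := S.sup Prod.snd

/-- `m(S)`, the maximum descent of `S`. -/
def mS (S : Finset (ℕ × ℕ)) : ℕ := (S.filter fun p => p.2 = p.1 + 1).sup Prod.fst

/-- `t(σ) = max{σ_k : 1 ≤ k ≤ j(S), h(k) ≥ j(S)+1}`. -/
def tOf (h : ℕ → ℕ) (S : Finset (ℕ × ℕ)) (σ : Equiv.Perm (Fin (jS S))) : ℕ :=
  ((Finset.Icc 1 (jS S)).filter fun k => jS S + 1 ≤ h k).sup (entry σ)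

/-- `B_k(S,n)`, the permutations in `I_h(S,n)` with entry `k` in position `h(m(S))`. -/
def Bset (h : ℕ → ℕ) (S : Finset (ℕ × ℕ)) (k n : ℕ) : Finset (Equiv.Perm (Fin n)) :=
  (Ih h S n).filter fun π => entry π (h (mS S)) = k

/-- The coefficient `b_k(S) = #B_k(S, h(m(S)))`. -/
def bCoeff (h : ℕ → ℕ) (S : Finset (ℕ × ℕ)) (k : ℕ) : ℕ := (Bset h S k (h (mS S))).card

/-- The coefficient `a_k(S)`. -/
def aCoeff (h : ℕ → ℕ) (S : Finset (ℕ × ℕ)) (k : ℕ) : ℕ :=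
  ((Ih h S (mS S + h (mS S) - 1)).filter fun π =>
    ((Finset.Icc 1 (mS S)).image (entry π)) ∩ Finset.Icc (h (mS S)) (mS S + h (mS S) - 1)
      = Finset.Icc (h (mS S)) (h (mS S) + k - 1)).card

/-- The length (number of inversions) of a permutation. -/
def lenPerm {n : ℕ} (π : Equiv.Perm (Fin n)) : ℕ :=
  ((Finset.univ : Finset (Fin n × Fin n)).filter fun p => p.1 < p.2 ∧ π p.2 < π p.1).card

/-- `ℓ_{[a,b]}(A) = #{(x,y) ∈ [a,b]² : x > y, x ∈ A, y ∉ A}`. -/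
def lenSet (a b : ℕ) (A : Finset ℕ) : ℕ :=
  ((Finset.Icc a b ×ˢ Finset.Icc a b).filter fun q => q.2 < q.1 ∧ q.1 ∈ A ∧ q.2 ∉ A).card

namespace Stmt3Aux

lemma strictMono_le_apply {k n : ℕ} {f : Fin k → Fin n} (hf : StrictMono f) (r : Fin k) :
    (r : ℕ) ≤ (f r : ℕ) := by
  suffices key : ∀ m, ∀ r : Fin k, (r : ℕ) = m → (r : ℕ) ≤ (f r : ℕ) from key _ r rfl
  intro m
  induction m with
  | zero => intro r h; omega
  | succ m ih =>
    intro r hn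
    have hm : m < k := by omega
    have h1 : m ≤ (f ⟨m, hm⟩ : ℕ) := by simpa using ih ⟨m, hm⟩ rfl
    have h2 : f ⟨m, hm⟩ < f r := hf (by simp [Fin.lt_def]; omega)
    rw [Fin.lt_def] at h2
    omega

lemma orderEmbOfFin_initial {n k t : ℕ} (A : Finset (Fin n)) (hA : A.card = k)
    (hsub : ∀ x : Fin n, (x : ℕ) < t → x ∈ A) :
    ∀ r : Fin k, (r : ℕ) < t → ((A.orderEmbOfFin hA r : Fin n) : ℕ) = (r : ℕ) := by
  have hkn : k ≤ n := by
    have := Finset.card_le_univ A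
    simpa [hA] using this
  suffices key : ∀ m, ∀ r : Fin k, (r : ℕ) = m → (r : ℕ) < t →
      ((A.orderEmbOfFin hA r : Fin n) : ℕ) = (r : ℕ) by
    intro r hrt; exact key (r : ℕ) r rfl hrt
  intro m
  induction m using Nat.strong_induction_on with
  | _ m ih =>
    intro r hm hrt
    have hge : (r : ℕ) ≤ (A.orderEmbOfFin hA r : ℕ) :=
      strictMono_le_apply (A.orderEmbOfFin hA).strictMono r
    have hrn : (r : ℕ) < n := lt_of_lt_of_le r.isLt hkn
    have hmem : (⟨(r : ℕ), hrn⟩ : Fin n) ∈ A := hsub _ (by simpa using hrt)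
    have hrange : (⟨(r : ℕ), hrn⟩ : Fin n) ∈ Set.range (A.orderEmbOfFin hA) := by
      rw [Finset.range_orderEmbOfFin]; exact hmem
    obtain ⟨s, hs⟩ := hrange
    have hsval : ((A.orderEmbOfFin hA s : Fin n) : ℕ) = (r : ℕ) := by rw [hs]
    have hsr : (r : ℕ) ≤ (s : ℕ) := by
      by_contra hlt
      push_neg at hlt
      have := ih (s : ℕ) (by omega) s rfl (by omega)
      omega
    have hmono : (A.orderEmbOfFin hA r : ℕ) ≤ (A.orderEmbOfFin hA s : ℕ) := by
      have := (A.orderEmbOfFin hA).monotone (show r ≤ s from Fin.le_def.mpr hsr)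
      exact this
    omega

lemma head_eq {n j : ℕ} (hjn : j ≤ n) (σ : Equiv.Perm (Fin j)) (π : Equiv.Perm (Fin n))
    (hflat : ∀ i k : Fin j, σ i < σ k ↔ π (Fin.castLE hjn i) < π (Fin.castLE hjn k))
    (A : Finset (Fin n)) (hA : A.card = j)
    (hmem : ∀ i : Fin j, π (Fin.castLE hjn i) ∈ A) (i : Fin j) :
    π (Fin.castLE hjn i) = A.orderEmbOfFin hA (σ i) := by
  have hf : ∀ x : Fin j, π (Fin.castLE hjn (σ.symm x)) ∈ A := fun x => hmem _
  have hmono : StrictMono (fun x : Fin j => π (Fin.castLE hjn (σ.symm x))) := by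
    intro x y hxy
    exact (hflat (σ.symm x) (σ.symm y)).mp (by simpa using hxy)
  have h1 := Finset.orderEmbOfFin_unique hA hf hmono
  have h2 := congrFun h1 (σ i)
  simpa using h2

lemma tail_eq {n j : ℕ} (hjn : j ≤ n) (π : Equiv.Perm (Fin n)) (A : Finset (Fin n))
    (hAc : Aᶜ.card = n - j)
    (hnm : ∀ i : Fin n, j ≤ (i : ℕ) → π i ∉ A)
    (htail : ∀ a b : Fin n, j ≤ (a : ℕ) → (a : ℕ) < (b : ℕ) → π a < π b)
    (i : Fin n) (hi : j ≤ (i : ℕ)) :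
    π i = Aᶜ.orderEmbOfFin hAc ⟨(i : ℕ) - j, by have := i.isLt; omega⟩ := by
  have hf : ∀ x : Fin (n - j), π ⟨j + (x : ℕ), by have := x.isLt; omega⟩ ∈ Aᶜ := by
    intro x
    rw [Finset.mem_compl]
    exact hnm _ (by simp)
  have hmono : StrictMono (fun x : Fin (n - j) =>
      π (⟨j + (x : ℕ), by have := x.isLt; omega⟩ : Fin n)) := by
    intro x y hxy
    rw [Fin.lt_def] at hxy
    exact htail _ _ (by simp) (by simp; omega)
  have h1 := Finset.orderEmbOfFin_unique hAc hf hmono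
  have h2 := congrFun h1 ⟨(i : ℕ) - j, by have := i.isLt; omega⟩
  simp only at h2
  rw [← h2]
  congr 1
  exact Fin.ext (by simp; omega)

lemma image_orderEmbOfFin {n k : ℕ} (A : Finset (Fin n)) (hA : A.card = k) :
    Finset.image (fun i => A.orderEmbOfFin hA i) Finset.univ = A := by
  apply Finset.eq_of_subset_of_card_le
  · intro x hx
    simp only [Finset.mem_image] at hx
    obtain ⟨i, _, rfl⟩ := hx
    exact A.orderEmbOfFin_mem hA i
  · rw [Finset.card_image_of_injective _ (A.orderEmbOfFin hA).injective, Finset.card_univ,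
      Fintype.card_fin, hA]


lemma invh_mem {h : ℕ → ℕ} {n : ℕ} (π : Equiv.Perm (Fin n)) (x y : ℕ) :
    (x, y) ∈ invh h π ↔ ∃ a b : Fin n, ((a : ℕ) < (b : ℕ) ∧ (b : ℕ) + 1 ≤ h ((a : ℕ) + 1) ∧
      π b < π a) ∧ (a : ℕ) + 1 = x ∧ (b : ℕ) + 1 = y := by
  simp [invh, Finset.mem_image, Finset.mem_filter, Prod.ext_iff]


lemma invh_eq_iff {h : ℕ → ℕ} {n j : ℕ} (hjn : j ≤ n)
    (S : Finset (ℕ × ℕ)) (hjS : ∀ p ∈ S, p.2 ≤ j)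
    (σ : Equiv.Perm (Fin j)) (hσ : invh h σ = S) (π : Equiv.Perm (Fin n))
    (hflat : ∀ i k : Fin j, σ i < σ k ↔ π (Fin.castLE hjn i) < π (Fin.castLE hjn k)) :
    invh h π = S ↔ ∀ a b : Fin n, (a : ℕ) < (b : ℕ) → j ≤ (b : ℕ) →
      (b : ℕ) + 1 ≤ h ((a : ℕ) + 1) → π a < π b := by
  constructor
  · intro he a b hab hjb hh
    rcases lt_trichotomy (π a) (π b) with hlt | heq | hgt
    · exact hlt
    · exact absurd (π.injective heq) (by intro hc; rw [hc] at hab; omega)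
    · exfalso
      have hmem : ((a : ℕ) + 1, (b : ℕ) + 1) ∈ invh h π :=
        (invh_mem π _ _).mpr ⟨a, b, ⟨hab, hh, hgt⟩, rfl, rfl⟩
      rw [he] at hmem
      have := hjS _ hmem
      simp at this
      omega
  · intro hcond
    ext ⟨x, y⟩
    rw [invh_mem, ← hσ, invh_mem]
    constructor
    · rintro ⟨a, b, ⟨h1, h2, h3⟩, hx, hy⟩
      have hbj : (b : ℕ) < j := by
        by_contra hge
        exact absurd (hcond a b h1 (by omega) h2) (not_lt.mpr h3.le)
      have haj : (a : ℕ) < j := lt_trans h1 hbj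
      refine ⟨⟨(a : ℕ), haj⟩, ⟨(b : ℕ), hbj⟩, ⟨h1, h2, ?_⟩, hx, hy⟩
      apply (hflat _ _).mpr
      have ha' : Fin.castLE hjn (⟨(a : ℕ), haj⟩ : Fin j) = a := Fin.ext rfl
      have hb' : Fin.castLE hjn (⟨(b : ℕ), hbj⟩ : Fin j) = b := Fin.ext rfl
      rw [ha', hb']
      exact h3
    · rintro ⟨a, b, ⟨h1, h2, h3⟩, hx, hy⟩
      exact ⟨Fin.castLE hjn a, Fin.castLE hjn b, ⟨h1, h2, (hflat b a).mp h3⟩, hx, hy⟩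

lemma tail_mono {h : ℕ → ℕ} (hgt : ∀ i : ℕ, 0 < i → i < h i) {n j : ℕ}
    (π : Equiv.Perm (Fin n))
    (hcond : ∀ a b : Fin n, (a : ℕ) < (b : ℕ) → j ≤ (b : ℕ) →
      (b : ℕ) + 1 ≤ h ((a : ℕ) + 1) → π a < π b) :
    ∀ a b : Fin n, j ≤ (a : ℕ) → (a : ℕ) < (b : ℕ) → π a < π b := by
  have adj : ∀ a : Fin n, j ≤ (a : ℕ) → ∀ hb : (a : ℕ) + 1 < n,
      π a < π ⟨(a : ℕ) + 1, hb⟩ := by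
    intro a ha hb
    refine hcond a ⟨(a : ℕ) + 1, hb⟩ (by simp) (by simp; omega) ?_
    have := hgt ((a : ℕ) + 1) (by omega)
    simpa using by omega
  intro a b ha hab
  have main : ∀ m, ∀ hm : m < n, (a : ℕ) < m → π a < π ⟨m, hm⟩ := by
    intro m
    induction m with
    | zero => intro _ h; omega
    | succ k ih =>
      intro hm hak
      rcases Nat.lt_or_ge (a : ℕ) k with hlt | hge
      · have h1 := ih (by omega) hlt
        have h2 := adj ⟨k, by omega⟩ (by simp; omega) (by simpa using hm)
        exact lt_trans h1 h2
      · have hak' : (a : ℕ) = k := by omega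
        have h2 := adj a ha (by omega)
        have : (⟨(a : ℕ) + 1, by omega⟩ : Fin n) = ⟨k + 1, hm⟩ := Fin.ext (by simp; omega)
        rwa [this] at h2
  have := main (b : ℕ) b.isLt hab
  simpa using this


def buildFun {n j : ℕ} (hjn : j ≤ n) (σ : Equiv.Perm (Fin j)) (A : Finset (Fin n))
    (hA : A.card = j) (hAc : Aᶜ.card = n - j) : Fin n → Fin n :=
  fun i => if hij : (i : ℕ) < j then A.orderEmbOfFin hA (σ ⟨(i : ℕ), hij⟩)
    else Aᶜ.orderEmbOfFin hAc ⟨(i : ℕ) - j, by have := i.isLt; omega⟩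

lemma buildFun_injective {n j : ℕ} (hjn : j ≤ n) (σ : Equiv.Perm (Fin j)) (A : Finset (Fin n))
    (hA : A.card = j) (hAc : Aᶜ.card = n - j) :
    Function.Injective (buildFun hjn σ A hA hAc) := by
  intro x y hxy
  unfold buildFun at hxy
  by_cases hx : (x : ℕ) < j <;> by_cases hy : (y : ℕ) < j
  · rw [dif_pos hx, dif_pos hy] at hxy
    have h1 := (A.orderEmbOfFin hA).injective hxy
    have h2 := σ.injective h1
    exact Fin.ext (by simpa [Fin.ext_iff] using h2)
  · rw [dif_pos hx, dif_neg hy] at hxy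
    exfalso
    have h1 := A.orderEmbOfFin_mem hA (σ ⟨(x : ℕ), hx⟩)
    have h2 := Aᶜ.orderEmbOfFin_mem hAc (⟨(y : ℕ) - j, by have := y.isLt; omega⟩ : Fin (n - j))
    rw [hxy] at h1
    rw [Finset.mem_compl] at h2
    exact h2 h1
  · rw [dif_neg hx, dif_pos hy] at hxy
    exfalso
    have h1 := A.orderEmbOfFin_mem hA (σ ⟨(y : ℕ), hy⟩)
    have h2 := Aᶜ.orderEmbOfFin_mem hAc (⟨(x : ℕ) - j, by have := x.isLt; omega⟩ : Fin (n - j))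
    rw [← hxy] at h1
    rw [Finset.mem_compl] at h2
    exact h2 h1
  · rw [dif_neg hx, dif_neg hy] at hxy
    have h1 := (Aᶜ.orderEmbOfFin hAc).injective hxy
    have h2 : (x : ℕ) - j = (y : ℕ) - j := by simpa [Fin.ext_iff] using h1
    exact Fin.ext (by omega)

noncomputable def buildPerm {n j : ℕ} (hjn : j ≤ n) (σ : Equiv.Perm (Fin j)) (A : Finset (Fin n))
    (hA : A.card = j) (hAc : Aᶜ.card = n - j) : Equiv.Perm (Fin n) :=
  Equiv.ofBijective _ (Finite.injective_iff_bijective.mp (buildFun_injective hjn σ A hA hAc))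

lemma buildPerm_head {n j : ℕ} (hjn : j ≤ n) (σ : Equiv.Perm (Fin j)) (A : Finset (Fin n))
    (hA : A.card = j) (hAc : Aᶜ.card = n - j) (i : Fin j) :
    buildPerm hjn σ A hA hAc (Fin.castLE hjn i) = A.orderEmbOfFin hA (σ i) := by
  show buildFun hjn σ A hA hAc _ = _
  unfold buildFun
  rw [dif_pos (show ((Fin.castLE hjn i : Fin n) : ℕ) < j from i.isLt)]
  rfl

lemma buildPerm_tail {n j : ℕ} (hjn : j ≤ n) (σ : Equiv.Perm (Fin j)) (A : Finset (Fin n))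
    (hA : A.card = j) (hAc : Aᶜ.card = n - j) (i : Fin n) (hi : j ≤ (i : ℕ)) :
    buildPerm hjn σ A hA hAc i
      = Aᶜ.orderEmbOfFin hAc ⟨(i : ℕ) - j, by have := i.isLt; omega⟩ := by
  show buildFun hjn σ A hA hAc _ = _
  unfold buildFun
  rw [dif_neg (by omega)]

lemma head_contains_initial {h : ℕ → ℕ} {n j t : ℕ} (hjn : j ≤ n)
    (σ : Equiv.Perm (Fin j)) (π : Equiv.Perm (Fin n))
    (hflat : ∀ i k : Fin j, σ i < σ k ↔ π (Fin.castLE hjn i) < π (Fin.castLE hjn k))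
    (hcond : ∀ a b : Fin n, (a : ℕ) < (b : ℕ) → j ≤ (b : ℕ) →
      (b : ℕ) + 1 ≤ h ((a : ℕ) + 1) → π a < π b)
    (htail : ∀ a b : Fin n, j ≤ (a : ℕ) → (a : ℕ) < (b : ℕ) → π a < π b)
    (A : Finset (Fin n)) (hA : A.card = j)
    (hmem : ∀ i : Fin j, π (Fin.castLE hjn i) ∈ A)
    (hattain : 0 < t → ∃ a : ℕ, ∃ ha : a < j, j + 1 ≤ h (a + 1) ∧
      ((σ ⟨a, ha⟩ : Fin j) : ℕ) + 1 = t) :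
    ∀ x : Fin n, (x : ℕ) < t → x ∈ A := by
  intro x hx
  have ht0 : 0 < t := by omega
  obtain ⟨a, ha, hha, hval⟩ := hattain ht0
  by_cases hjn' : j < n
  · set b : Fin n := ⟨j, hjn'⟩ with hb
    have hπa : π (Fin.castLE hjn ⟨a, ha⟩) = A.orderEmbOfFin hA (σ ⟨a, ha⟩) :=
      head_eq hjn σ π hflat A hA hmem _
    have hlt : π (Fin.castLE hjn ⟨a, ha⟩) < π b :=
      hcond _ b (by simpa using ha) (by simp [hb]) (by simpa using hha)
    have hbmin : ∀ y : Fin n, y < π b → y ∈ A := by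
      intro y hy
      by_contra hyA
      obtain ⟨c, rfl⟩ : ∃ c, π c = y := ⟨π.symm y, by simp⟩
      have hjc : j ≤ (c : ℕ) := by
        by_contra hcj
        push_neg at hcj
        have := hmem ⟨(c : ℕ), hcj⟩
        rw [show Fin.castLE hjn ⟨(c : ℕ), hcj⟩ = c from Fin.ext rfl] at this
        exact hyA this
      have hle : π b ≤ π c := by
        rcases eq_or_lt_of_le (show (b : ℕ) ≤ (c : ℕ) by simpa [hb] using hjc) with he | hlt2
        · rw [show b = c from Fin.ext he]
        · exact (htail b c (by simp [hb]) hlt2).le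
      exact absurd hy (not_lt.mpr hle)
    have hge : ((σ ⟨a, ha⟩ : Fin j) : ℕ) ≤ ((A.orderEmbOfFin hA (σ ⟨a, ha⟩)) : ℕ) :=
      strictMono_le_apply (A.orderEmbOfFin hA).strictMono _
    have hxlt : (x : ℕ) < ((π b) : ℕ) := by
      rw [hπa, Fin.lt_def] at hlt
      omega
    exact hbmin x (Fin.lt_def.mpr hxlt)
  · have hjeq : j = n := le_antisymm hjn (not_lt.mp hjn')
    have : A = Finset.univ := Finset.eq_univ_of_card A (by rw [hA, hjeq, Fintype.card_fin])
    rw [this]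
    exact Finset.mem_univ x

end Stmt3Aux

open Stmt3Aux

/-- The number of `π ∈ I_h(S,n)` flattening to a given `σ ∈ I_h(S, j(S))`
is `C(n − t(σ), n − j(S))`. -/
theorem stmt3 (h : ℕ → ℕ) (hmono : ∀ ⦃i j : ℕ⦄, 0 < i → i ≤ j → h i ≤ h j)
    (hgt : ∀ i : ℕ, 0 < i → i < h i) (S : Finset (ℕ × ℕ)) (hSne : S.Nonempty)
    (hadm : Admissible h S) (n : ℕ) (hn : jS S ≤ n)
    (σ : Equiv.Perm (Fin (jS S))) (hσ : σ ∈ Ih h S (jS S)) :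
    Nat.card {π : Equiv.Perm (Fin n) // π ∈ Ih h S n ∧
        ∀ i j : Fin (jS S), σ i < σ j ↔ π (Fin.castLE hn i) < π (Fin.castLE hn j)} =
      Nat.choose (n - tOf h S σ) (n - jS S) := by
  have hσS : invh h σ = S := (Finset.mem_filter.mp hσ).2
  have hjSle : ∀ p ∈ S, p.2 ≤ jS S := fun p hp => Finset.le_sup hp
  have htj : tOf h S σ ≤ jS S := by
    unfold tOf
    apply Finset.sup_le
    intro k hk
    simp only [Finset.mem_filter, Finset.mem_Icc] at hk
    unfold entry
    rw [dif_pos (show k - 1 < jS S by omega)]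
    exact Nat.succ_le_of_lt (σ _).isLt
  have hrel : ∀ (a : ℕ) (ha : a < jS S), jS S + 1 ≤ h (a + 1) →
      ((σ ⟨a, ha⟩ : Fin (jS S)) : ℕ) + 1 ≤ tOf h S σ := by
    intro a ha hh
    have hk : a + 1 ∈ (Finset.Icc 1 (jS S)).filter (fun k => jS S + 1 ≤ h k) := by
      simp only [Finset.mem_filter, Finset.mem_Icc]
      exact ⟨⟨by omega, by omega⟩, hh⟩
    have hle := Finset.le_sup (f := entry σ) hk
    unfold entry at hle
    rw [dif_pos (show a + 1 - 1 < jS S by omega)] at hle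
    simpa [tOf, entry] using hle
  have hattain : 0 < tOf h S σ → ∃ a : ℕ, ∃ ha : a < jS S, jS S + 1 ≤ h (a + 1) ∧
      ((σ ⟨a, ha⟩ : Fin (jS S)) : ℕ) + 1 = tOf h S σ := by
    intro ht0
    have hne : ((Finset.Icc 1 (jS S)).filter fun k => jS S + 1 ≤ h k).Nonempty := by
      by_contra hemp
      rw [Finset.not_nonempty_iff_eq_empty] at hemp
      have hz : tOf h S σ = 0 := by unfold tOf; rw [hemp]; rfl
      omega
    obtain ⟨k, hk, hkeq⟩ := Finset.exists_mem_eq_sup _ hne (entry σ)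
    simp only [Finset.mem_filter, Finset.mem_Icc] at hk
    refine ⟨k - 1, by omega, by rw [show k - 1 + 1 = k by omega]; exact hk.2, ?_⟩
    have hkeq' : tOf h S σ = entry σ k := hkeq
    rw [hkeq']
    unfold entry
    rw [dif_pos (show k - 1 < jS S by omega)]
  rw [Nat.card_eq_fintype_card, Fintype.card_subtype]
  have hbij : (Finset.univ.filter (fun π : Equiv.Perm (Fin n) => π ∈ Ih h S n ∧
      ∀ i j : Fin (jS S), σ i < σ j ↔ π (Fin.castLE hn i) < π (Fin.castLE hn j))).card
      = ((Finset.univ.powersetCard (jS S)).filter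
          (fun A : Finset (Fin n) => ∀ x : Fin n, (x : ℕ) < tOf h S σ → x ∈ A)).card := by
    apply Finset.card_bij
      (fun π _ => Finset.image (fun i : Fin (jS S) => π (Fin.castLE hn i)) Finset.univ)
    · intro π hπ
      rw [Finset.mem_filter] at hπ
      obtain ⟨-, hIh, hflat⟩ := hπ
      have hinv : invh h π = S := (Finset.mem_filter.mp hIh).2
      have hcond := (invh_eq_iff hn S hjSle σ hσS π hflat).mp hinv
      have htail := tail_mono hgt π hcond
      have hinj : Function.Injective (fun i : Fin (jS S) => π (Fin.castLE hn i)) := by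
        intro a b hab
        have h1 : Fin.castLE hn a = Fin.castLE hn b := π.injective hab
        have h2 := congrArg Fin.val h1
        exact Fin.ext h2
      have hAcard : (Finset.image (fun i : Fin (jS S) => π (Fin.castLE hn i)) Finset.univ).card
          = jS S := by
        rw [Finset.card_image_of_injective _ hinj, Finset.card_univ, Fintype.card_fin]
      rw [Finset.mem_filter]
      refine ⟨Finset.mem_powersetCard_univ.mpr hAcard, ?_⟩
      exact head_contains_initial hn σ π hflat hcond htail _ hAcard
        (fun i => Finset.mem_image_of_mem _ (Finset.mem_univ i)) hattain
    · intro π hπ π' hπ' heq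
      rw [Finset.mem_filter] at hπ hπ'
      obtain ⟨-, hIh, hflat⟩ := hπ
      obtain ⟨-, hIh', hflat'⟩ := hπ'
      have hinv : invh h π = S := (Finset.mem_filter.mp hIh).2
      have hinv' : invh h π' = S := (Finset.mem_filter.mp hIh').2
      have hcond := (invh_eq_iff hn S hjSle σ hσS π hflat).mp hinv
      have hcond' := (invh_eq_iff hn S hjSle σ hσS π' hflat').mp hinv'
      have htail := tail_mono hgt π hcond
      have htail' := tail_mono hgt π' hcond'
      have hinj : Function.Injective (fun i : Fin (jS S) => π (Fin.castLE hn i)) := by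
        intro a b hab
        have h1 : Fin.castLE hn a = Fin.castLE hn b := π.injective hab
        have h2 := congrArg Fin.val h1
        exact Fin.ext h2
      set A := Finset.image (fun i : Fin (jS S) => π (Fin.castLE hn i)) Finset.univ with hAdef
      have hAcard : A.card = jS S := by
        rw [hAdef, Finset.card_image_of_injective _ hinj, Finset.card_univ, Fintype.card_fin]
      have hAc : Aᶜ.card = n - jS S := by
        rw [Finset.card_compl, hAcard, Fintype.card_fin]
      have hmem : ∀ i : Fin (jS S), π (Fin.castLE hn i) ∈ A :=
        fun i => Finset.mem_image_of_mem _ (Finset.mem_univ i)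
      have hmem' : ∀ i : Fin (jS S), π' (Fin.castLE hn i) ∈ A := by
        intro i
        rw [heq]
        exact Finset.mem_image_of_mem _ (Finset.mem_univ i)
      have hnm : ∀ i : Fin n, jS S ≤ (i : ℕ) → π i ∉ A := by
        intro i hi hiA
        rw [hAdef] at hiA
        simp only [Finset.mem_image, Finset.mem_univ, true_and] at hiA
        obtain ⟨i', hi'⟩ := hiA
        have hcast := congrArg Fin.val (π.injective hi')
        have := i'.isLt
        simp only [Fin.coe_castLE] at hcast
        omega
      have hnm' : ∀ i : Fin n, jS S ≤ (i : ℕ) → π' i ∉ A := by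
        intro i hi hiA
        rw [heq] at hiA
        simp only [Finset.mem_image, Finset.mem_univ, true_and] at hiA
        obtain ⟨i', hi'⟩ := hiA
        have hcast := congrArg Fin.val (π'.injective hi')
        have := i'.isLt
        simp only [Fin.coe_castLE] at hcast
        omega
      apply Equiv.ext
      intro i
      by_cases hij : (i : ℕ) < jS S
      · have h1 := head_eq hn σ π hflat A hAcard hmem ⟨(i : ℕ), hij⟩
        have h2 := head_eq hn σ π' hflat' A hAcard hmem' ⟨(i : ℕ), hij⟩
        rw [show Fin.castLE hn (⟨(i : ℕ), hij⟩ : Fin (jS S)) = i from Fin.ext rfl] at h1 h2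
        rw [h1, h2]
      · push_neg at hij
        rw [tail_eq hn π A hAc hnm htail i hij, tail_eq hn π' A hAc hnm' htail' i hij]
    · intro A hA'
      rw [Finset.mem_filter] at hA'
      obtain ⟨hA1, hQ⟩ := hA'
      have hAcard : A.card = jS S := Finset.mem_powersetCard_univ.mp hA1
      have hAc : Aᶜ.card = n - jS S := by
        rw [Finset.card_compl, hAcard, Fintype.card_fin]
      have hflatB : ∀ i k : Fin (jS S), σ i < σ k ↔
          buildPerm hn σ A hAcard hAc (Fin.castLE hn i)
            < buildPerm hn σ A hAcard hAc (Fin.castLE hn k) := by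
        intro i k
        rw [buildPerm_head, buildPerm_head]
        exact ((A.orderEmbOfFin hAcard).lt_iff_lt).symm
      have hcondB : ∀ a b : Fin n, (a : ℕ) < (b : ℕ) → jS S ≤ (b : ℕ) →
          (b : ℕ) + 1 ≤ h ((a : ℕ) + 1) →
          buildPerm hn σ A hAcard hAc a < buildPerm hn σ A hAcard hAc b := by
        intro a b hab hjb hh
        have h2 : ∀ r : Fin (n - jS S), tOf h S σ ≤ ((Aᶜ.orderEmbOfFin hAc r) : ℕ) := by
          intro r
          by_contra hlt2
          push_neg at hlt2
          have hm := Aᶜ.orderEmbOfFin_mem hAc r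
          rw [Finset.mem_compl] at hm
          exact hm (hQ _ hlt2)
        rw [buildPerm_tail hn σ A hAcard hAc b hjb]
        by_cases haj : (a : ℕ) < jS S
        · rw [show a = Fin.castLE hn ⟨(a : ℕ), haj⟩ from Fin.ext rfl, buildPerm_head]
          rw [Fin.lt_def]
          have hrelA : ((σ ⟨(a : ℕ), haj⟩ : Fin (jS S)) : ℕ) + 1 ≤ tOf h S σ :=
            hrel _ haj (by omega)
          have h1 := orderEmbOfFin_initial A hAcard hQ (σ ⟨(a : ℕ), haj⟩) (by omega)
          rw [h1]
          exact lt_of_lt_of_le (by omega) (h2 _)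
        · push_neg at haj
          rw [buildPerm_tail hn σ A hAcard hAc a haj]
          exact (Aᶜ.orderEmbOfFin hAc).strictMono (Fin.mk_lt_mk.mpr (by omega))
      have hinvB : invh h (buildPerm hn σ A hAcard hAc) = S :=
        (invh_eq_iff hn S hjSle σ hσS _ hflatB).mpr hcondB
      refine ⟨buildPerm hn σ A hAcard hAc, ?_, ?_⟩
      · rw [Finset.mem_filter]
        exact ⟨Finset.mem_univ _, Finset.mem_filter.mpr ⟨Finset.mem_univ _, hinvB⟩, hflatB⟩
      · have hinjB : Function.Injective
            (fun i : Fin (jS S) => buildPerm hn σ A hAcard hAc (Fin.castLE hn i)) := by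
          intro a b hab
          have h1 : Fin.castLE hn a = Fin.castLE hn b :=
            (buildPerm hn σ A hAcard hAc).injective hab
          have h2 := congrArg Fin.val h1
          exact Fin.ext h2
        apply Finset.eq_of_subset_of_card_le
        · intro x hx
          simp only [Finset.mem_image, Finset.mem_univ, true_and] at hx
          obtain ⟨i, rfl⟩ := hx
          rw [buildPerm_head]
          exact A.orderEmbOfFin_mem hAcard (σ i)
        · rw [Finset.card_image_of_injective _ hinjB,
            Finset.card_univ, Fintype.card_fin, hAcard]
  rw [hbij]
  have htn : tOf h S σ ≤ n := le_trans htj hn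
  have hLeq : Finset.univ.filter (fun x : Fin n => (x : ℕ) < tOf h S σ)
      = Finset.image (Fin.castLE htn) Finset.univ := by
    ext x
    simp only [Finset.mem_filter, Finset.mem_univ, true_and, Finset.mem_image]
    constructor
    · intro hx
      exact ⟨⟨(x : ℕ), hx⟩, Fin.ext rfl⟩
    · rintro ⟨y, rfl⟩
      exact y.isLt
  have hLcard : (Finset.univ.filter (fun x : Fin n => (x : ℕ) < tOf h S σ)).card = tOf h S σ := by
    have hcinj : Function.Injective (Fin.castLE htn) := by
      intro a b hab
      have h2 := congrArg Fin.val hab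
      exact Fin.ext h2
    rw [hLeq, Finset.card_image_of_injective _ hcinj, Finset.card_univ, Fintype.card_fin]
  have hHcard : (Finset.univ.filter (fun x : Fin n => tOf h S σ ≤ (x : ℕ))).card
      = n - tOf h S σ := by
    have hsplit := Finset.card_filter_add_card_filter_not
      (s := (Finset.univ : Finset (Fin n))) (p := fun x : Fin n => (x : ℕ) < tOf h S σ)
    have hnot : (Finset.univ.filter (fun x : Fin n => ¬ (x : ℕ) < tOf h S σ))
        = Finset.univ.filter (fun x : Fin n => tOf h S σ ≤ (x : ℕ)) :=
      Finset.filter_congr (fun x _ => by simp [not_lt])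
    rw [hnot, hLcard, Finset.card_univ, Fintype.card_fin] at hsplit
    omega
  have hstep : ((Finset.univ.powersetCard (jS S)).filter
      (fun A : Finset (Fin n) => ∀ x : Fin n, (x : ℕ) < tOf h S σ → x ∈ A)).card
      = ((Finset.univ.filter (fun x : Fin n => tOf h S σ ≤ (x : ℕ))).powersetCard
          (jS S - tOf h S σ)).card := by
    apply Finset.card_bij' (fun A _ => A.filter (fun x : Fin n => tOf h S σ ≤ (x : ℕ)))
      (fun B _ => B ∪ Finset.univ.filter (fun x : Fin n => (x : ℕ) < tOf h S σ))
    · intro A hA'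
      rw [Finset.mem_filter] at hA'
      obtain ⟨hA1, hQ⟩ := hA'
      have hAcard : A.card = jS S := Finset.mem_powersetCard_univ.mp hA1
      rw [Finset.mem_powersetCard]
      refine ⟨Finset.filter_subset_filter _ (Finset.subset_univ A), ?_⟩
      have hsplitA := Finset.card_filter_add_card_filter_not
        (s := A) (p := fun x : Fin n => (x : ℕ) < tOf h S σ)
      have hAL : A.filter (fun x : Fin n => (x : ℕ) < tOf h S σ)
          = Finset.univ.filter (fun x : Fin n => (x : ℕ) < tOf h S σ) := by
        ext x
        simp only [Finset.mem_filter, Finset.mem_univ, true_and]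
        exact ⟨fun hx => hx.2, fun hx => ⟨hQ x hx, hx⟩⟩
      have hnotA : A.filter (fun x : Fin n => ¬ (x : ℕ) < tOf h S σ)
          = A.filter (fun x : Fin n => tOf h S σ ≤ (x : ℕ)) :=
        Finset.filter_congr (fun x _ => by simp [not_lt])
      rw [hAL, hLcard, hnotA, hAcard] at hsplitA
      omega
    · intro B hB
      rw [Finset.mem_powersetCard] at hB
      obtain ⟨hBsub, hBcard⟩ := hB
      rw [Finset.mem_filter]
      constructor
      · rw [Finset.mem_powersetCard_univ]
        rw [Finset.card_union_of_disjoint]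
        · rw [hBcard, hLcard]; omega
        · rw [Finset.disjoint_left]
          intro x hxB hxL
          have h1 := hBsub hxB
          simp only [Finset.mem_filter, Finset.mem_univ, true_and] at h1 hxL
          omega
      · intro x hx
        apply Finset.mem_union_right
        simp only [Finset.mem_filter, Finset.mem_univ, true_and]
        exact hx
    · intro A hA'
      rw [Finset.mem_filter] at hA'
      obtain ⟨hA1, hQ⟩ := hA'
      ext x
      simp only [Finset.mem_union, Finset.mem_filter, Finset.mem_univ, true_and]
      constructor
      · rintro (⟨hxA, -⟩ | hxt)
        · exact hxA
        · exact hQ x hxt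
      · intro hxA
        by_cases hxt : (x : ℕ) < tOf h S σ
        · exact Or.inr hxt
        · exact Or.inl ⟨hxA, by omega⟩
    · intro B hB
      rw [Finset.mem_powersetCard] at hB
      obtain ⟨hBsub, -⟩ := hB
      ext x
      simp only [Finset.mem_filter, Finset.mem_union, Finset.mem_univ, true_and]
      constructor
      · rintro ⟨hxB | hxt, hge⟩
        · exact hxB
        · omega
      · intro hxB
        have hx2 := hBsub hxB
        simp only [Finset.mem_filter, Finset.mem_univ, true_and] at hx2
        exact ⟨Or.inl hxB, hx2⟩
  rw [hstep, Finset.card_powersetCard, hHcard]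
  rw [show n - jS S = (n - tOf h S σ) - (jS S - tOf h S σ) by omega]
  exact (Nat.choose_symm (by omega)).symm
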